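/- arXiv:1801.02654 — 4 statements merged into one kernel-verified Lean document; each statement's English description precedes it below -/
import Mathlib

section
/- For a k×n matrix M over a commutative ring and a (k-2)-subset I of column indices with I disjoint from {a,b,c,d} where a < b < c < d, the maximal minors satisfy p_{Iac} p_{Ibd} = p_{Iab} p_{Icd} + p_{Iad} p_{Ibc}, where p_{Is t} denotes the k×k minor on columns I ∪ {s,t} (with columns in the indicated order, using the sign convention that transposing two column indices negates the minor). -/
open Matrix

/-- Cramer-type syzygy: for `k+1` vectors in `R^k`, the alternating sum of
(minor omitting `i`) times (the `l`-th coordinate of the `i`-th vector) vanishes. -/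
lemma cramer_vec_aux {R : Type*} [CommRing R] {k : ℕ} (w : Fin (k + 1) → (Fin k → R))
    (l : Fin k) :
    ∑ i : Fin (k + 1), ((-1 : R) ^ (i : ℕ) * (Matrix.of (w ∘ i.succAbove)).det) * w i l = 0 := by
  have h0 : (Matrix.of (fun i => Fin.cons (w i l) (w i)) :
      Matrix (Fin (k + 1)) (Fin (k + 1)) R).det = 0 := by
    refine Matrix.det_zero_of_column_eq (i := 0) (j := l.succ) (Fin.succ_ne_zero l).symm ?_
    intro r
    simp
  rw [Matrix.det_succ_column_zero] at h0
  rw [← h0]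
  refine Finset.sum_congr rfl fun i _ => ?_
  have hsub : (Matrix.of (fun i => Fin.cons (w i l) (w i)) :
      Matrix (Fin (k + 1)) (Fin (k + 1)) R).submatrix i.succAbove Fin.succ
      = Matrix.of (w ∘ i.succAbove) := by
    ext r s
    simp
  rw [hsub]
  simp [mul_comm, mul_assoc, mul_left_comm]

lemma snoc_comp_succAbove_last {V : Type*} {n : ℕ} (W : Fin n → V) (x : V) :
    (Fin.snoc W x : Fin (n + 1) → V) ∘ (Fin.last n).succAbove = W := by
  rw [Fin.succAbove_last]
  exact Fin.snoc_comp_castSucc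

lemma snoc_comp_succAbove_castSucc {V : Type*} {n : ℕ} (W : Fin (n + 1) → V) (x : V)
    (i : Fin (n + 1)) :
    (Fin.snoc W x : Fin (n + 2) → V) ∘ (Fin.castSucc i).succAbove
      = Fin.snoc (W ∘ i.succAbove) x := by
  funext r
  refine Fin.lastCases ?_ (fun j => ?_) r
  · have h : (Fin.castSucc i).succAbove (Fin.last n) = Fin.last (n + 1) := by
      rw [Fin.succAbove_castSucc_of_le _ _ (Fin.le_last i), Fin.succ_last]
    simp [h]
  · simp [Fin.castSucc_succAbove_castSucc]

theorem plucker_relation_general {R : Type*} [CommRing R] {m n : ℕ}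
    (M : Matrix (Fin (m + 2)) (Fin n) R)
    (e : Fin m → Fin n) (he : Function.Injective e)
    (a b c d : Fin n) (hab : a < b) (hbc : b < c) (hcd : c < d)
    (hdisj : ∀ i, e i ≠ a ∧ e i ≠ b ∧ e i ≠ c ∧ e i ≠ d)
    (p : Fin n → Fin n → R)
    (hp : ∀ s t, p s t = (M.submatrix id (Fin.snoc (Fin.snoc e s) t)).det) :
    p a c * p b d = p a b * p c d + p a d * p b c := by
  classical
  set col : Fin n → Fin (m + 2) → R := fun j i => M i j with hcol
  set ce : Fin m → Fin (m + 2) → R := col ∘ e with hce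
  -- minors in terms of row-tuples
  have hp' : ∀ s t, p s t
      = (Matrix.of (Fin.snoc (Fin.snoc ce (col s)) (col t)) :
          Matrix (Fin (m + 2)) (Fin (m + 2)) R).det := by
    intro s t
    rw [hp, ← Matrix.det_transpose]
    congr 1
    ext i j
    refine Fin.lastCases ?_ (fun i' => ?_) i
    · simp [col]
    · refine Fin.lastCases ?_ (fun i'' => ?_) i'
      · simp [col]
      · simp [ce, col]
  set W2 : Fin (m + 2) → Fin (m + 2) → R := Fin.snoc (Fin.snoc ce (col b)) (col c) with hW2
  set w : Fin (m + 3) → Fin (m + 2) → R := Fin.snoc W2 (col d) with hw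
  set cf : Fin (m + 3) → R :=
    fun i => (-1 : R) ^ (i : ℕ) * (Matrix.of (w ∘ i.succAbove)).det with hcf
  have hzero : (∑ i, cf i • w i) = 0 := by
    funext l
    simpa [Finset.sum_apply, cf] using cramer_vec_aux w l
  set A : Matrix (Fin (m + 2)) (Fin (m + 2)) R :=
    Matrix.of (Fin.snoc (Fin.snoc ce (col a)) (col a)) with hA
  have hupd : ∀ x : Fin (m + 2) → R, A.updateRow (Fin.last (m + 1)) x
      = Matrix.of (Fin.snoc (Fin.snoc ce (col a)) x) := by
    intro x
    ext i j
    rcases Fin.eq_castSucc_or_eq_last i with ⟨i', rfl⟩ | rfl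
    · rw [Matrix.updateRow_ne (Fin.castSucc_lt_last i').ne]
      simp [A]
    · simp
  -- linearity of the functional x ↦ det (A with last row x)
  have hlin : ∀ (s : Finset (Fin (m + 3))),
      (A.updateRow (Fin.last (m + 1)) (∑ i ∈ s, cf i • w i)).det
        = ∑ i ∈ s, cf i * (A.updateRow (Fin.last (m + 1)) (w i)).det := by
    intro s
    induction s using Finset.induction with
    | empty =>
        simp only [Finset.sum_empty]
        exact Matrix.det_eq_zero_of_row_eq_zero (Fin.last (m + 1)) (fun j => by simp)
    | insert _ _ hk ih =>
        rw [Finset.sum_insert hk, Matrix.det_updateRow_add, Matrix.det_updateRow_smul,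
          Finset.sum_insert hk, ih]
  have key : (0 : R) = ∑ i : Fin (m + 3), cf i * (A.updateRow (Fin.last (m + 1)) (w i)).det := by
    rw [← hlin Finset.univ, hzero]
    exact (Matrix.det_eq_zero_of_row_eq_zero (Fin.last (m + 1)) (fun j => by simp)).symm
  rw [Fin.sum_univ_castSucc, Fin.sum_univ_castSucc, Fin.sum_univ_castSucc] at key
  -- the terms coming from columns of `e` vanish
  have hterm0 : ∀ j : Fin m,
      cf (((j.castSucc).castSucc).castSucc)
        * (A.updateRow (Fin.last (m + 1)) (w (((j.castSucc).castSucc).castSucc))).det = 0 := by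
    intro j
    have hwj : w (((j.castSucc).castSucc).castSucc) = ce j := by
      simp [w, W2]
    rw [hwj, hupd]
    have : (Matrix.of (Fin.snoc (Fin.snoc ce (col a)) (ce j)) :
        Matrix (Fin (m + 2)) (Fin (m + 2)) R).det = 0 := by
      refine Matrix.det_zero_of_row_eq (i := (j.castSucc).castSucc)
        (j := Fin.last (m + 1)) (Fin.castSucc_lt_last j.castSucc).ne ?_
      show (Fin.snoc (Fin.snoc ce (col a)) (ce j) : Fin (m + 2) → Fin (m + 2) → R)
          ((j.castSucc).castSucc)
        = (Fin.snoc (Fin.snoc ce (col a)) (ce j) : Fin (m + 2) → Fin (m + 2) → R)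
          (Fin.last (m + 1))
      simp
    rw [this, mul_zero]
  rw [Finset.sum_congr rfl (fun j _ => hterm0 j), Finset.sum_const_zero, zero_add] at key
  -- compute the three remaining coefficients and values
  have hw1 : w (((Fin.last m).castSucc).castSucc) = col b := by simp [w, W2]
  have hw2 : w ((Fin.last (m + 1)).castSucc) = col c := by simp [w, W2]
  have hw3 : w (Fin.last (m + 2)) = col d := by simp [w]
  have hc1 : cf (((Fin.last m).castSucc).castSucc) = (-1 : R) ^ m * p c d := by
    have h1 : w ∘ (((Fin.last m).castSucc).castSucc).succAbove
        = Fin.snoc (Fin.snoc ce (col c)) (col d) := by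
      rw [hw, snoc_comp_succAbove_castSucc, hW2, snoc_comp_succAbove_castSucc,
        snoc_comp_succAbove_last]
    rw [hcf]
    simp only [h1, ← hp' c d]
    simp
  have hc2 : cf ((Fin.last (m + 1)).castSucc) = (-1 : R) ^ (m + 1) * p b d := by
    have h1 : w ∘ ((Fin.last (m + 1)).castSucc).succAbove
        = Fin.snoc (Fin.snoc ce (col b)) (col d) := by
      rw [hw, snoc_comp_succAbove_castSucc, hW2, snoc_comp_succAbove_last]
    rw [hcf]
    simp only [h1, ← hp' b d]
    simp
  have hc3 : cf (Fin.last (m + 2)) = (-1 : R) ^ (m + 2) * p b c := by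
    have h1 : w ∘ (Fin.last (m + 2)).succAbove = W2 := by
      rw [hw, snoc_comp_succAbove_last]
    rw [hcf]
    simp only [h1, hW2, ← hp' b c]
    simp
  have hd1 : (A.updateRow (Fin.last (m + 1)) (col b)).det = p a b := by
    rw [hupd, ← hp' a b]
  have hd2 : (A.updateRow (Fin.last (m + 1)) (col c)).det = p a c := by
    rw [hupd, ← hp' a c]
  have hd3 : (A.updateRow (Fin.last (m + 1)) (col d)).det = p a d := by
    rw [hupd, ← hp' a d]
  rw [hw1, hw2, hw3, hc1, hc2, hc3, hd1, hd2, hd3] at key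
  have hε : (-1 : R) ^ m * (-1 : R) ^ m = 1 := by
    rw [← pow_add]
    exact Even.neg_one_pow ⟨m, rfl⟩
  linear_combination ((-1 : R) ^ m) * key
    + (p a b * p c d + p a d * p b c - p a c * p b d) * hε
end

section
/- Every maximal collection of pairwise weakly separated k-subsets of {1,...,n} contains all n interval (cyclically consecutive) k-subsets of {1,...,n}. -/
/-- Elements are in cyclic order (mod n) if some rotation of the list is strictly increasing. -/
def CyclicallyOrdered (l : List ℕ) : Prop := ∃ k, (l.rotate k).Chain' (· < ·)

/-- Two subsets `I, J` of `{1,...,n}` are weakly separated (non-crossing) if there do not exist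
`s < t < u < v` in cyclic order with `s, u ∈ I \ J` and `t, v ∈ J \ I`. -/
def WeaklySeparated (I J : Finset ℕ) : Prop :=
  ¬ ∃ s t u v : ℕ, CyclicallyOrdered [s, t, u, v] ∧
    s ∈ I ∧ s ∉ J ∧ u ∈ I ∧ u ∉ J ∧ t ∈ J ∧ t ∉ I ∧ v ∈ J ∧ v ∉ I

/-- A maximal collection of pairwise weakly separated `k`-subsets of `{1,...,n}`. -/
def MaxWS (n k : ℕ) (C : Set (Finset ℕ)) : Prop :=
  (∀ I ∈ C, I ⊆ Finset.Icc 1 n ∧ I.card = k) ∧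
  (∀ I ∈ C, ∀ J ∈ C, WeaklySeparated I J) ∧
  (∀ K : Finset ℕ, K ⊆ Finset.Icc 1 n → K.card = k →
      (∀ I ∈ C, WeaklySeparated K I) → K ∈ C)

/-- An interval `k`-subset of `{1,...,n}`: `k` cyclically consecutive elements. -/
def IntervalSubset (n k : ℕ) (I : Finset ℕ) : Prop :=
  ∃ i, I = (Finset.range k).image (fun t => (i + t) % n + 1)

lemma mod_two_cases (n m : ℕ) (h : m < 2*n) : m % n = m ∨ m % n + n = m := by
  rcases Nat.lt_or_ge m n with h1 | h1
  · left; exact Nat.mod_eq_of_lt h1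
  · right
    rw [Nat.mod_eq_sub_mod h1, Nat.mod_eq_of_lt (by omega)]
    omega

lemma add_mod_left' (i t n : ℕ) : (i + t) % n = (i % n + t) % n := by
  conv_lhs => rw [Nat.add_mod]
  conv_rhs => rw [Nat.add_mod, Nat.mod_mod_of_dvd _ dvd_rfl]

lemma cyc_cases (s t u v : ℕ) (h : CyclicallyOrdered [s,t,u,v]) :
    (s<t∧t<u∧u<v) ∨ (t<u∧u<v∧v<s) ∨ (u<v∧v<s∧s<t) ∨ (v<s∧s<t∧t<u) := by
  obtain ⟨m, hm⟩ := h
  rw [← List.rotate_mod] at hm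
  simp only [List.length_cons, List.length_nil] at hm
  have h4 : m % 4 < 4 := by omega
  have heq := List.rotate_eq_drop_append_take (l := [s,t,u,v]) (n := m % 4) (by simpa using h4.le)
  rw [heq] at hm
  interval_cases hr : (m % 4) <;> simp_all [List.Chain', List.isChain_cons_cons]

lemma mem_int (n k i x : ℕ) (hn : 0 < n) (hk : k ≤ n) :
    x ∈ (Finset.range k).image (fun t => (i + t) % n + 1) ↔
      (1 ≤ x ∧ x ≤ n ∧ (x - 1 + (n - i % n)) % n < k) := by
  have hr : i % n < n := Nat.mod_lt _ hn
  constructor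
  · rintro hx
    simp only [Finset.mem_image, Finset.mem_range] at hx
    obtain ⟨t, ht, rfl⟩ := hx
    have h1 : (i + t) % n < n := Nat.mod_lt _ hn
    refine ⟨by omega, by omega, ?_⟩
    have e1 : (i + t) % n = (i % n + t) % n := add_mod_left' i t n
    have h3 := mod_two_cases n (i % n + t) (by omega)
    have h5 := mod_two_cases n ((i + t) % n + 1 - 1 + (n - i % n)) (by omega)
    have h7 : ((i + t) % n + 1 - 1 + (n - i % n)) % n < n := Nat.mod_lt _ hn
    omega
  · rintro ⟨hx1, hx2, hx3⟩
    simp only [Finset.mem_image, Finset.mem_range]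
    refine ⟨(x - 1 + (n - i % n)) % n, hx3, ?_⟩
    set a := (x - 1 + (n - i % n)) % n with ha
    have ha1 : a < n := Nat.mod_lt _ hn
    have ha2 := mod_two_cases n (x - 1 + (n - i % n)) (by omega)
    have e1 : (i + a) % n = (i % n + a) % n := add_mod_left' i a n
    have h3 := mod_two_cases n (i % n + a) (by omega)
    have h1 : (i + a) % n < n := Nat.mod_lt _ hn
    omega

lemma ws_interval (n k i : ℕ) (hn : 0 < n) (hk : k ≤ n) (J : Finset ℕ)
    (hJ : J ⊆ Finset.Icc 1 n) :
    WeaklySeparated ((Finset.range k).image (fun t => (i + t) % n + 1)) J := by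
  rintro ⟨s, t, u, v, hcyc, hsI, _, huI, _, htJ, htI, hvJ, hvI⟩
  have hr : i % n < n := Nat.mod_lt _ hn
  have hs := (mem_int n k i s hn hk).mp hsI
  have hu := (mem_int n k i u hn hk).mp huI
  have ht' := hJ htJ
  have hv' := hJ hvJ
  rw [Finset.mem_Icc] at ht' hv'
  have ht : ¬ (1 ≤ t ∧ t ≤ n ∧ (t - 1 + (n - i % n)) % n < k) := by
    intro h; exact htI ((mem_int n k i t hn hk).mpr h)
  have hv : ¬ (1 ≤ v ∧ v ≤ n ∧ (v - 1 + (n - i % n)) % n < k) := by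
    intro h; exact hvI ((mem_int n k i v hn hk).mpr h)
  have hts : (t - 1 + (n - i % n)) % n ≥ k := by
    by_contra h; exact ht ⟨ht'.1, ht'.2, by omega⟩
  have hvs : (v - 1 + (n - i % n)) % n ≥ k := by
    by_contra h; exact hv ⟨hv'.1, hv'.2, by omega⟩
  have ds := mod_two_cases n (s - 1 + (n - i % n)) (by omega)
  have dt := mod_two_cases n (t - 1 + (n - i % n)) (by omega)
  have du := mod_two_cases n (u - 1 + (n - i % n)) (by omega)
  have dv := mod_two_cases n (v - 1 + (n - i % n)) (by omega)
  have bs : (s - 1 + (n - i % n)) % n < n := Nat.mod_lt _ hn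
  have bt : (t - 1 + (n - i % n)) % n < n := Nat.mod_lt _ hn
  have bu : (u - 1 + (n - i % n)) % n < n := Nat.mod_lt _ hn
  have bv : (v - 1 + (n - i % n)) % n < n := Nat.mod_lt _ hn
  have hord := cyc_cases s t u v hcyc
  obtain ⟨hs1, hs2, hs3⟩ := hs
  obtain ⟨hu1, hu2, hu3⟩ := hu
  omega

theorem maximal_contains_intervals (n k : ℕ) (hk : k ≤ n) (C : Set (Finset ℕ))
    (hC : MaxWS n k C) (I : Finset ℕ) (hI : IntervalSubset n k I) : I ∈ C := by
  obtain ⟨i, rfl⟩ := hI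
  obtain ⟨h1, h2, h3⟩ := hC
  rcases Nat.eq_zero_or_pos n with hn | hn
  · have hk0 : k = 0 := by omega
    subst hn hk0
    simp only [Finset.range_zero, Finset.image_empty]
    refine h3 ∅ (by simp) (by simp) ?_
    intro J _
    rintro ⟨s, t, u, v, _, hsI, _⟩
    simp at hsI
  · refine h3 _ ?_ ?_ ?_
    · intro x hx
      rw [mem_int n k i x hn hk] at hx
      rw [Finset.mem_Icc]
      exact ⟨hx.1, hx.2.1⟩
    · rw [Finset.card_image_of_injOn, Finset.card_range]
      intro t1 ht1 t2 ht2 he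
      simp only [Finset.coe_range, Set.mem_Iio] at ht1 ht2
      simp only at he
      have e1 : (i + t1) % n = (i % n + t1) % n := add_mod_left' i t1 n
      have e2 : (i + t2) % n = (i % n + t2) % n := add_mod_left' i t2 n
      have hr : i % n < n := Nat.mod_lt _ hn
      have d1 := mod_two_cases n (i % n + t1) (by omega)
      have d2 := mod_two_cases n (i % n + t2) (by omega)
      omega
    · intro J hJC
      exact ws_interval n k i hn hk J (h1 J hJC).1
end

section
/- For the snake-triangulation cluster in Gr(3,n) of quadrilateral type (whose non-interval 3-subsets are exactly {i,i+1,n−i} for 1 ≤ i < n/2−1, {i,i+1,n−i+1} for 2 ≤ i < n/2−1, {i,n−i,n−i+1} for 2 ≤ i < n/2−1, and {i,n−i+1,n−i+2} for 2 ≤ i < n/2, together with all n interval 3-subsets), any two members of this collection are pairwise weakly separated. -/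
set_option maxHeartbeats 1000000

/-- The snake-triangulation (quadrilateral type) collection of 3-subsets of `{1,...,n}`:
all `n` cyclic interval 3-subsets together with the non-interval subsets
`{i,i+1,n-i}` for `1 ≤ i < n/2 - 1`, `{i,i+1,n-i+1}` and `{i,n-i,n-i+1}` for
`2 ≤ i < n/2 - 1`, and `{i,n-i+1,n-i+2}` for `2 ≤ i < n/2`. -/
def QuadCluster (n : ℕ) : Finset (Finset ℕ) :=
  ((Finset.range n).image (fun i => (Finset.range 3).image (fun t => (i + t) % n + 1))) ∪
  (((Finset.Icc 1 n).filter (fun i => 2 * i + 2 < n)).image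
      (fun i => ({i, i + 1, n - i} : Finset ℕ))) ∪
  (((Finset.Icc 2 n).filter (fun i => 2 * i + 2 < n)).image
      (fun i => ({i, i + 1, n - i + 1} : Finset ℕ))) ∪
  (((Finset.Icc 2 n).filter (fun i => 2 * i + 2 < n)).image
      (fun i => ({i, n - i, n - i + 1} : Finset ℕ))) ∪
  (((Finset.Icc 2 n).filter (fun i => 2 * i < n)).image
      (fun i => ({i, n - i + 1, n - i + 2} : Finset ℕ)))

lemma mod_small (m n : ℕ) (h0 : 0 < n) (h : m < 2 * n) :
    (m % n = m ∨ m % n + n = m) ∧ m % n < n := by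
  refine ⟨?_, Nat.mod_lt _ h0⟩
  rcases Nat.lt_or_ge m n with h' | h'
  · left; exact Nat.mod_eq_of_lt h'
  · right
    have : m % n = m - n := by
      rw [Nat.mod_eq_sub_mod h']; exact Nat.mod_eq_of_lt (by omega)
    omega

lemma rot1 (a b c d : ℕ) : ([a, b, c, d] : List ℕ).rotate 1 = [b, c, d, a] := rfl
lemma rot2 (a b c d : ℕ) : ([a, b, c, d] : List ℕ).rotate 2 = [c, d, a, b] := rfl
lemma rot3 (a b c d : ℕ) : ([a, b, c, d] : List ℕ).rotate 3 = [d, a, b, c] := rfl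

lemma cyclic4 {s t u v : ℕ} (h : CyclicallyOrdered [s, t, u, v]) :
    (s<t ∧ t<u ∧ u<v) ∨ (t<u ∧ u<v ∧ v<s) ∨ (u<v ∧ v<s ∧ s<t) ∨ (v<s ∧ s<t ∧ t<u) := by
  obtain ⟨k, hk⟩ := h
  have hlen : ([s, t, u, v] : List ℕ).length = 4 := rfl
  rw [← List.rotate_mod, hlen] at hk
  have h4 : k % 4 = 0 ∨ k % 4 = 1 ∨ k % 4 = 2 ∨ k % 4 = 3 := by omega
  rcases h4 with h | h | h | h <;> rw [h] at hk
  · rw [List.rotate_zero] at hk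
    simp only [List.Chain', List.isChain_cons_cons, List.isChain_singleton, and_true] at hk; tauto
  · rw [rot1] at hk
    simp only [List.Chain', List.isChain_cons_cons, List.isChain_singleton, and_true] at hk; tauto
  · rw [rot2] at hk
    simp only [List.Chain', List.isChain_cons_cons, List.isChain_singleton, and_true] at hk; tauto
  · rw [rot3] at hk
    simp only [List.Chain', List.isChain_cons_cons, List.isChain_singleton, and_true] at hk; tauto

lemma cyclic4' {s t u v : ℕ}
    (h : (s<t ∧ t<u ∧ u<v) ∨ (t<u ∧ u<v ∧ v<s) ∨ (u<v ∧ v<s ∧ s<t) ∨ (v<s ∧ s<t ∧ t<u)) :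
    CyclicallyOrdered [s, t, u, v] := by
  rcases h with ⟨h1,h2,h3⟩ | ⟨h1,h2,h3⟩ | ⟨h1,h2,h3⟩ | ⟨h1,h2,h3⟩
  · refine ⟨0, ?_⟩
    simp only [List.rotate_zero, List.Chain', List.isChain_cons_cons, List.isChain_singleton, and_true]
    exact ⟨h1, h2, h3⟩
  · refine ⟨1, ?_⟩
    rw [rot1]
    simp only [List.Chain', List.isChain_cons_cons, List.isChain_singleton, and_true]
    exact ⟨h1, h2, h3⟩
  · refine ⟨2, ?_⟩
    rw [rot2]
    simp only [List.Chain', List.isChain_cons_cons, List.isChain_singleton, and_true]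
    exact ⟨h1, h2, h3⟩
  · refine ⟨3, ?_⟩
    rw [rot3]
    simp only [List.Chain', List.isChain_cons_cons, List.isChain_singleton, and_true]
    exact ⟨h1, h2, h3⟩

lemma ws_symm {I J : Finset ℕ} (h : WeaklySeparated I J) : WeaklySeparated J I := by
  rintro ⟨s, t, u, v, hc, hs1, hs2, hu1, hu2, ht1, ht2, hv1, hv2⟩
  exact h ⟨t, u, v, s, cyclic4' (by have := cyclic4 hc; tauto),
    ht1, ht2, hv1, hv2, hu1, hu2, hs1, hs2⟩

lemma interval_mem_iff (n i x : ℕ) :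
    x ∈ (Finset.range 3).image (fun t => (i + t) % n + 1) ↔
      (x = i % n + 1 ∨ x = (i + 1) % n + 1 ∨ x = (i + 2) % n + 1) := by
  simp only [Finset.mem_image, Finset.mem_range]
  constructor
  · rintro ⟨t, ht, rfl⟩
    interval_cases t
    · left; rfl
    · right; left; rfl
    · right; right; rfl
  · rintro (rfl | rfl | rfl)
    exacts [⟨0, by norm_num⟩, ⟨1, by norm_num⟩, ⟨2, by norm_num⟩]

lemma interval_bound (n i : ℕ) (hn : 1 ≤ n) :
    ∀ x ∈ (Finset.range 3).image (fun t => (i + t) % n + 1), 1 ≤ x ∧ x ≤ n := by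
  intro x hx
  simp only [Finset.mem_image, Finset.mem_range] at hx
  obtain ⟨t, ht, rfl⟩ := hx
  have := Nat.mod_lt (i + t) (show 0 < n by omega)
  omega

lemma interval_ws_left (n i : ℕ) (hn : 5 ≤ n) (hi : i < n) (J : Finset ℕ)
    (hJ : ∀ x ∈ J, 1 ≤ x ∧ x ≤ n) :
    WeaklySeparated ((Finset.range 3).image (fun t => (i + t) % n + 1)) J := by
  rintro ⟨s, t, u, v, hc, hs1, hs2, hu1, hu2, ht1, ht2, hv1, hv2⟩
  have hc' := cyclic4 hc
  have ht' := hJ t ht1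
  have hv' := hJ v hv1
  have m1 := mod_small i n (by omega) (by omega)
  have m2 := mod_small (i + 1) n (by omega) (by omega)
  have m3 := mod_small (i + 2) n (by omega) (by omega)
  simp only [interval_mem_iff, not_or] at hs1 hu1 ht2 hv2
  rcases hs1 with rfl | rfl | rfl <;> rcases hu1 with rfl | rfl | rfl <;> omega

lemma pair_22 (n i j : ℕ) (hn : 5 ≤ n) (hia : 1 ≤ i) (hia2 : 2 * i + 2 < n)
    (hjb : 1 ≤ j) (hjb2 : 2 * j + 2 < n) :
    WeaklySeparated ({i, i + 1, n - i} : Finset ℕ) ({j, j + 1, n - j} : Finset ℕ) := by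
  rintro ⟨s, t, u, v, hc, hs1, hs2, hu1, hu2, ht1, ht2, hv1, hv2⟩
  have hc' := cyclic4 hc
  simp only [Finset.mem_insert, Finset.mem_singleton, not_or] at hs1 hs2 hu1 hu2 ht1 ht2 hv1 hv2
  rcases hs1 with rfl | rfl | rfl <;> rcases hu1 with rfl | rfl | rfl <;>
    rcases ht1 with rfl | rfl | rfl <;> rcases hv1 with rfl | rfl | rfl <;> omega

lemma pair_23 (n i j : ℕ) (hn : 5 ≤ n) (hia : 1 ≤ i) (hia2 : 2 * i + 2 < n)
    (hjb : 2 ≤ j) (hjb2 : 2 * j + 2 < n) :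
    WeaklySeparated ({i, i + 1, n - i} : Finset ℕ) ({j, j + 1, n - j + 1} : Finset ℕ) := by
  rintro ⟨s, t, u, v, hc, hs1, hs2, hu1, hu2, ht1, ht2, hv1, hv2⟩
  have hc' := cyclic4 hc
  simp only [Finset.mem_insert, Finset.mem_singleton, not_or] at hs1 hs2 hu1 hu2 ht1 ht2 hv1 hv2
  rcases hs1 with rfl | rfl | rfl <;> rcases hu1 with rfl | rfl | rfl <;>
    rcases ht1 with rfl | rfl | rfl <;> rcases hv1 with rfl | rfl | rfl <;> omega

lemma pair_24 (n i j : ℕ) (hn : 5 ≤ n) (hia : 1 ≤ i) (hia2 : 2 * i + 2 < n)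
    (hjb : 2 ≤ j) (hjb2 : 2 * j + 2 < n) :
    WeaklySeparated ({i, i + 1, n - i} : Finset ℕ) ({j, n - j, n - j + 1} : Finset ℕ) := by
  rintro ⟨s, t, u, v, hc, hs1, hs2, hu1, hu2, ht1, ht2, hv1, hv2⟩
  have hc' := cyclic4 hc
  simp only [Finset.mem_insert, Finset.mem_singleton, not_or] at hs1 hs2 hu1 hu2 ht1 ht2 hv1 hv2
  rcases hs1 with rfl | rfl | rfl <;> rcases hu1 with rfl | rfl | rfl <;>
    rcases ht1 with rfl | rfl | rfl <;> rcases hv1 with rfl | rfl | rfl <;> omega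

lemma pair_25 (n i j : ℕ) (hn : 5 ≤ n) (hia : 1 ≤ i) (hia2 : 2 * i + 2 < n)
    (hjb : 2 ≤ j) (hjb2 : 2 * j < n) :
    WeaklySeparated ({i, i + 1, n - i} : Finset ℕ) ({j, n - j + 1, n - j + 2} : Finset ℕ) := by
  rintro ⟨s, t, u, v, hc, hs1, hs2, hu1, hu2, ht1, ht2, hv1, hv2⟩
  have hc' := cyclic4 hc
  simp only [Finset.mem_insert, Finset.mem_singleton, not_or] at hs1 hs2 hu1 hu2 ht1 ht2 hv1 hv2
  rcases hs1 with rfl | rfl | rfl <;> rcases hu1 with rfl | rfl | rfl <;>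
    rcases ht1 with rfl | rfl | rfl <;> rcases hv1 with rfl | rfl | rfl <;> omega

lemma pair_32 (n i j : ℕ) (hn : 5 ≤ n) (hia : 2 ≤ i) (hia2 : 2 * i + 2 < n)
    (hjb : 1 ≤ j) (hjb2 : 2 * j + 2 < n) :
    WeaklySeparated ({i, i + 1, n - i + 1} : Finset ℕ) ({j, j + 1, n - j} : Finset ℕ) := by
  rintro ⟨s, t, u, v, hc, hs1, hs2, hu1, hu2, ht1, ht2, hv1, hv2⟩
  have hc' := cyclic4 hc
  simp only [Finset.mem_insert, Finset.mem_singleton, not_or] at hs1 hs2 hu1 hu2 ht1 ht2 hv1 hv2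
  rcases hs1 with rfl | rfl | rfl <;> rcases hu1 with rfl | rfl | rfl <;>
    rcases ht1 with rfl | rfl | rfl <;> rcases hv1 with rfl | rfl | rfl <;> omega

lemma pair_33 (n i j : ℕ) (hn : 5 ≤ n) (hia : 2 ≤ i) (hia2 : 2 * i + 2 < n)
    (hjb : 2 ≤ j) (hjb2 : 2 * j + 2 < n) :
    WeaklySeparated ({i, i + 1, n - i + 1} : Finset ℕ) ({j, j + 1, n - j + 1} : Finset ℕ) := by
  rintro ⟨s, t, u, v, hc, hs1, hs2, hu1, hu2, ht1, ht2, hv1, hv2⟩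
  have hc' := cyclic4 hc
  simp only [Finset.mem_insert, Finset.mem_singleton, not_or] at hs1 hs2 hu1 hu2 ht1 ht2 hv1 hv2
  rcases hs1 with rfl | rfl | rfl <;> rcases hu1 with rfl | rfl | rfl <;>
    rcases ht1 with rfl | rfl | rfl <;> rcases hv1 with rfl | rfl | rfl <;> omega

lemma pair_34 (n i j : ℕ) (hn : 5 ≤ n) (hia : 2 ≤ i) (hia2 : 2 * i + 2 < n)
    (hjb : 2 ≤ j) (hjb2 : 2 * j + 2 < n) :
    WeaklySeparated ({i, i + 1, n - i + 1} : Finset ℕ) ({j, n - j, n - j + 1} : Finset ℕ) := by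
  rintro ⟨s, t, u, v, hc, hs1, hs2, hu1, hu2, ht1, ht2, hv1, hv2⟩
  have hc' := cyclic4 hc
  simp only [Finset.mem_insert, Finset.mem_singleton, not_or] at hs1 hs2 hu1 hu2 ht1 ht2 hv1 hv2
  rcases hs1 with rfl | rfl | rfl <;> rcases hu1 with rfl | rfl | rfl <;>
    rcases ht1 with rfl | rfl | rfl <;> rcases hv1 with rfl | rfl | rfl <;> omega

lemma pair_35 (n i j : ℕ) (hn : 5 ≤ n) (hia : 2 ≤ i) (hia2 : 2 * i + 2 < n)
    (hjb : 2 ≤ j) (hjb2 : 2 * j < n) :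
    WeaklySeparated ({i, i + 1, n - i + 1} : Finset ℕ) ({j, n - j + 1, n - j + 2} : Finset ℕ) := by
  rintro ⟨s, t, u, v, hc, hs1, hs2, hu1, hu2, ht1, ht2, hv1, hv2⟩
  have hc' := cyclic4 hc
  simp only [Finset.mem_insert, Finset.mem_singleton, not_or] at hs1 hs2 hu1 hu2 ht1 ht2 hv1 hv2
  rcases hs1 with rfl | rfl | rfl <;> rcases hu1 with rfl | rfl | rfl <;>
    rcases ht1 with rfl | rfl | rfl <;> rcases hv1 with rfl | rfl | rfl <;> omega

lemma pair_42 (n i j : ℕ) (hn : 5 ≤ n) (hia : 2 ≤ i) (hia2 : 2 * i + 2 < n)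
    (hjb : 1 ≤ j) (hjb2 : 2 * j + 2 < n) :
    WeaklySeparated ({i, n - i, n - i + 1} : Finset ℕ) ({j, j + 1, n - j} : Finset ℕ) := by
  rintro ⟨s, t, u, v, hc, hs1, hs2, hu1, hu2, ht1, ht2, hv1, hv2⟩
  have hc' := cyclic4 hc
  simp only [Finset.mem_insert, Finset.mem_singleton, not_or] at hs1 hs2 hu1 hu2 ht1 ht2 hv1 hv2
  rcases hs1 with rfl | rfl | rfl <;> rcases hu1 with rfl | rfl | rfl <;>
    rcases ht1 with rfl | rfl | rfl <;> rcases hv1 with rfl | rfl | rfl <;> omega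

lemma pair_43 (n i j : ℕ) (hn : 5 ≤ n) (hia : 2 ≤ i) (hia2 : 2 * i + 2 < n)
    (hjb : 2 ≤ j) (hjb2 : 2 * j + 2 < n) :
    WeaklySeparated ({i, n - i, n - i + 1} : Finset ℕ) ({j, j + 1, n - j + 1} : Finset ℕ) := by
  rintro ⟨s, t, u, v, hc, hs1, hs2, hu1, hu2, ht1, ht2, hv1, hv2⟩
  have hc' := cyclic4 hc
  simp only [Finset.mem_insert, Finset.mem_singleton, not_or] at hs1 hs2 hu1 hu2 ht1 ht2 hv1 hv2
  rcases hs1 with rfl | rfl | rfl <;> rcases hu1 with rfl | rfl | rfl <;>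
    rcases ht1 with rfl | rfl | rfl <;> rcases hv1 with rfl | rfl | rfl <;> omega

lemma pair_44 (n i j : ℕ) (hn : 5 ≤ n) (hia : 2 ≤ i) (hia2 : 2 * i + 2 < n)
    (hjb : 2 ≤ j) (hjb2 : 2 * j + 2 < n) :
    WeaklySeparated ({i, n - i, n - i + 1} : Finset ℕ) ({j, n - j, n - j + 1} : Finset ℕ) := by
  rintro ⟨s, t, u, v, hc, hs1, hs2, hu1, hu2, ht1, ht2, hv1, hv2⟩
  have hc' := cyclic4 hc
  simp only [Finset.mem_insert, Finset.mem_singleton, not_or] at hs1 hs2 hu1 hu2 ht1 ht2 hv1 hv2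
  rcases hs1 with rfl | rfl | rfl <;> rcases hu1 with rfl | rfl | rfl <;>
    rcases ht1 with rfl | rfl | rfl <;> rcases hv1 with rfl | rfl | rfl <;> omega

lemma pair_45 (n i j : ℕ) (hn : 5 ≤ n) (hia : 2 ≤ i) (hia2 : 2 * i + 2 < n)
    (hjb : 2 ≤ j) (hjb2 : 2 * j < n) :
    WeaklySeparated ({i, n - i, n - i + 1} : Finset ℕ) ({j, n - j + 1, n - j + 2} : Finset ℕ) := by
  rintro ⟨s, t, u, v, hc, hs1, hs2, hu1, hu2, ht1, ht2, hv1, hv2⟩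
  have hc' := cyclic4 hc
  simp only [Finset.mem_insert, Finset.mem_singleton, not_or] at hs1 hs2 hu1 hu2 ht1 ht2 hv1 hv2
  rcases hs1 with rfl | rfl | rfl <;> rcases hu1 with rfl | rfl | rfl <;>
    rcases ht1 with rfl | rfl | rfl <;> rcases hv1 with rfl | rfl | rfl <;> omega

lemma pair_52 (n i j : ℕ) (hn : 5 ≤ n) (hia : 2 ≤ i) (hia2 : 2 * i < n)
    (hjb : 1 ≤ j) (hjb2 : 2 * j + 2 < n) :
    WeaklySeparated ({i, n - i + 1, n - i + 2} : Finset ℕ) ({j, j + 1, n - j} : Finset ℕ) := by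
  rintro ⟨s, t, u, v, hc, hs1, hs2, hu1, hu2, ht1, ht2, hv1, hv2⟩
  have hc' := cyclic4 hc
  simp only [Finset.mem_insert, Finset.mem_singleton, not_or] at hs1 hs2 hu1 hu2 ht1 ht2 hv1 hv2
  rcases hs1 with rfl | rfl | rfl <;> rcases hu1 with rfl | rfl | rfl <;>
    rcases ht1 with rfl | rfl | rfl <;> rcases hv1 with rfl | rfl | rfl <;> omega

lemma pair_53 (n i j : ℕ) (hn : 5 ≤ n) (hia : 2 ≤ i) (hia2 : 2 * i < n)
    (hjb : 2 ≤ j) (hjb2 : 2 * j + 2 < n) :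
    WeaklySeparated ({i, n - i + 1, n - i + 2} : Finset ℕ) ({j, j + 1, n - j + 1} : Finset ℕ) := by
  rintro ⟨s, t, u, v, hc, hs1, hs2, hu1, hu2, ht1, ht2, hv1, hv2⟩
  have hc' := cyclic4 hc
  simp only [Finset.mem_insert, Finset.mem_singleton, not_or] at hs1 hs2 hu1 hu2 ht1 ht2 hv1 hv2
  rcases hs1 with rfl | rfl | rfl <;> rcases hu1 with rfl | rfl | rfl <;>
    rcases ht1 with rfl | rfl | rfl <;> rcases hv1 with rfl | rfl | rfl <;> omega

lemma pair_54 (n i j : ℕ) (hn : 5 ≤ n) (hia : 2 ≤ i) (hia2 : 2 * i < n)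
    (hjb : 2 ≤ j) (hjb2 : 2 * j + 2 < n) :
    WeaklySeparated ({i, n - i + 1, n - i + 2} : Finset ℕ) ({j, n - j, n - j + 1} : Finset ℕ) := by
  rintro ⟨s, t, u, v, hc, hs1, hs2, hu1, hu2, ht1, ht2, hv1, hv2⟩
  have hc' := cyclic4 hc
  simp only [Finset.mem_insert, Finset.mem_singleton, not_or] at hs1 hs2 hu1 hu2 ht1 ht2 hv1 hv2
  rcases hs1 with rfl | rfl | rfl <;> rcases hu1 with rfl | rfl | rfl <;>
    rcases ht1 with rfl | rfl | rfl <;> rcases hv1 with rfl | rfl | rfl <;> omega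

lemma pair_55 (n i j : ℕ) (hn : 5 ≤ n) (hia : 2 ≤ i) (hia2 : 2 * i < n)
    (hjb : 2 ≤ j) (hjb2 : 2 * j < n) :
    WeaklySeparated ({i, n - i + 1, n - i + 2} : Finset ℕ) ({j, n - j + 1, n - j + 2} : Finset ℕ) := by
  rintro ⟨s, t, u, v, hc, hs1, hs2, hu1, hu2, ht1, ht2, hv1, hv2⟩
  have hc' := cyclic4 hc
  simp only [Finset.mem_insert, Finset.mem_singleton, not_or] at hs1 hs2 hu1 hu2 ht1 ht2 hv1 hv2
  rcases hs1 with rfl | rfl | rfl <;> rcases hu1 with rfl | rfl | rfl <;>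
    rcases ht1 with rfl | rfl | rfl <;> rcases hv1 with rfl | rfl | rfl <;> omega

theorem quad_cluster_weakly_separated (n : ℕ) (hn : 5 ≤ n) :
    ∀ I ∈ QuadCluster n, ∀ J ∈ QuadCluster n, WeaklySeparated I J := by
  intro I hI J hJ
  simp only [QuadCluster, Finset.mem_union, Finset.mem_image, Finset.mem_filter,
    Finset.mem_Icc, Finset.mem_range] at hI hJ
  have snake_bound : ∀ a b c : ℕ, a ≤ n → b ≤ n → c ≤ n → 1 ≤ a → 1 ≤ b → 1 ≤ c →
      ∀ x ∈ ({a, b, c} : Finset ℕ), 1 ≤ x ∧ x ≤ n := by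
    intro a b c h1 h2 h3 h4 h5 h6 x hx
    simp only [Finset.mem_insert, Finset.mem_singleton] at hx
    rcases hx with rfl | rfl | rfl <;> omega
  obtain (((⟨i, hi, rfl⟩ | ⟨i, hi, rfl⟩) | ⟨i, hi, rfl⟩) | ⟨i, hi, rfl⟩) | ⟨i, hi, rfl⟩ := hI <;>
    obtain (((⟨j, hj, rfl⟩ | ⟨j, hj, rfl⟩) | ⟨j, hj, rfl⟩) | ⟨j, hj, rfl⟩) | ⟨j, hj, rfl⟩ := hJ
  · exact interval_ws_left n i hn hi _ (interval_bound n j (by omega))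
  · exact interval_ws_left n i hn hi _ (snake_bound _ _ _ (by omega) (by omega) (by omega) (by omega) (by omega) (by omega))
  · exact interval_ws_left n i hn hi _ (snake_bound _ _ _ (by omega) (by omega) (by omega) (by omega) (by omega) (by omega))
  · exact interval_ws_left n i hn hi _ (snake_bound _ _ _ (by omega) (by omega) (by omega) (by omega) (by omega) (by omega))
  · exact interval_ws_left n i hn hi _ (snake_bound _ _ _ (by omega) (by omega) (by omega) (by omega) (by omega) (by omega))
  · exact ws_symm (interval_ws_left n j hn hj _ (snake_bound _ _ _ (by omega) (by omega) (by omega) (by omega) (by omega) (by omega)))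
  · exact pair_22 n i j hn (by omega) (by omega) (by omega) (by omega)
  · exact pair_23 n i j hn (by omega) (by omega) (by omega) (by omega)
  · exact pair_24 n i j hn (by omega) (by omega) (by omega) (by omega)
  · exact pair_25 n i j hn (by omega) (by omega) (by omega) (by omega)
  · exact ws_symm (interval_ws_left n j hn hj _ (snake_bound _ _ _ (by omega) (by omega) (by omega) (by omega) (by omega) (by omega)))
  · exact pair_32 n i j hn (by omega) (by omega) (by omega) (by omega)
  · exact pair_33 n i j hn (by omega) (by omega) (by omega) (by omega)
  · exact pair_34 n i j hn (by omega) (by omega) (by omega) (by omega)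
  · exact pair_35 n i j hn (by omega) (by omega) (by omega) (by omega)
  · exact ws_symm (interval_ws_left n j hn hj _ (snake_bound _ _ _ (by omega) (by omega) (by omega) (by omega) (by omega) (by omega)))
  · exact pair_42 n i j hn (by omega) (by omega) (by omega) (by omega)
  · exact pair_43 n i j hn (by omega) (by omega) (by omega) (by omega)
  · exact pair_44 n i j hn (by omega) (by omega) (by omega) (by omega)
  · exact pair_45 n i j hn (by omega) (by omega) (by omega) (by omega)
  · exact ws_symm (interval_ws_left n j hn hj _ (snake_bound _ _ _ (by omega) (by omega) (by omega) (by omega) (by omega) (by omega)))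
  · exact pair_52 n i j hn (by omega) (by omega) (by omega) (by omega)
  · exact pair_53 n i j hn (by omega) (by omega) (by omega) (by omega)
  · exact pair_54 n i j hn (by omega) (by omega) (by omega) (by omega)
  · exact pair_55 n i j hn (by omega) (by omega) (by omega) (by omega)
end

section
/- Let I = {i,...,j} ∪ {l,...,m} be a double-interval k-subset (with the two intervals disjoint and nonadjacent cyclically). Then the 'shifted' double-interval subsets J₁ with label i⋯(j−1),(l−1)⋯m and J₂ with label (i+1)⋯j, l⋯(m+1) are crossing (not weakly separated) with each other. -/
theorem shifted_double_intervals_cross (n i j l m : ℕ)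
    (hi : 1 ≤ i) (hij : i < j) (hjl : j + 1 < l) (hlm : l ≤ m) (hmn : m < n) :
    ¬ WeaklySeparated (Finset.Icc i (j - 1) ∪ Finset.Icc (l - 1) m)
        (Finset.Icc (i + 1) j ∪ Finset.Icc l (m + 1)) := by
  intro h
  apply h
  refine ⟨i, j, l - 1, m + 1, ⟨0, ?_⟩, ?_, ?_, ?_, ?_, ?_, ?_, ?_, ?_⟩ <;>
    simp [List.rotate, List.Chain', List.isChain_cons_cons, Finset.mem_union, Finset.mem_Icc] <;> omega
end
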